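/- EL_int is strictly more expressive than EL: there exist two topological subset models on {x,y}, one with the discrete topology and one with topology {∅,{y},{x,y}}, both with v(p) = {x}, that are linked by a partial bisimulation relating (x,{x,y}) to (x,{x,y}) and (y,{x,y}) to (y,{x,y}), yet int(p) holds at (x,{x,y}) in the first model and fails at (x,{x,y}) in the second. Hence no EL formula is equivalent to int(p). -/
import Mathlib


/-- Formulas of the public announcement language PAL (with the `int` modality). -/
inductive Form : Type
  | atom : ℕ → Form
  | neg : Form → Form
  | and : Form → Form → Form
  | K : Form → Form
  | int : Form → Form
  | ann : Form → Form → Form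

/-- Material implication, defined classically. -/
def Form.imp (φ ψ : Form) : Form := .neg (.and φ (.neg ψ))

/-- Int-semantics for PAL on a topological subset model with valuation `v`. -/
def sat {α : Type*} [TopologicalSpace α] (v : ℕ → Set α) : Form → α → Set α → Prop
  | .atom n, x, _ => x ∈ v n
  | .neg φ, x, U => ¬ sat v φ x U
  | .and φ ψ, x, U => sat v φ x U ∧ sat v ψ x U
  | .K φ, x, U => ∀ y ∈ U, sat v φ y U
  | .int φ, x, U => x ∈ interior {y ∈ U | sat v φ y U}
  | .ann φ ψ, x, U =>
      x ∈ interior {y ∈ U | sat v φ y U} → sat v ψ x (interior {y ∈ U | sat v φ y U})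

/-- Formulas of the basic epistemic language EL (atoms, Booleans, K). -/
inductive FormEL : Type
  | atom : ℕ → FormEL
  | neg : FormEL → FormEL
  | and : FormEL → FormEL → FormEL
  | K : FormEL → FormEL

/-- Standard semantics of EL on subset models (only the valuation matters). -/
def satEL {α : Type*} (v : ℕ → Set α) : FormEL → α → Set α → Prop
  | .atom n, x, _ => x ∈ v n
  | .neg φ, x, U => ¬ satEL v φ x U
  | .and φ ψ, x, U => satEL v φ x U ∧ satEL v ψ x U
  | .K φ, x, U => ∀ y ∈ U, satEL v φ y U

/-- `EL_int` is strictly more expressive than `EL`: two topological subset models on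
`Bool` (one discrete, one with topology `{∅, {false}, univ}`), both with `v(p) = {true}`,
are linked by a partial bisimulation relating `(x, univ)` to itself for each point, yet
`int(p)` holds at `(true, univ)` in the first and fails there in the second.
Hence no EL formula is equivalent to `int(p)`. -/

private lemma aux_mem_interior {α : Type*} [TopologicalSpace α] {s : Set α} {x : α} :
    x ∈ interior s ↔ ∃ t ⊆ s, IsOpen t ∧ x ∈ t := mem_interior

private lemma aux_interior_eq {α : Type*} [TopologicalSpace α] {s : Set α} (h : IsOpen s) :
    interior s = s := h.interior_eq

theorem el_int_strictly_more_expressive :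
    let t1 : TopologicalSpace Bool := ⊥
    let t2 : TopologicalSpace Bool := TopologicalSpace.generateFrom {{false}}
    let v : ℕ → Set Bool := fun _ => {true}
    let Z : Bool → Set Bool → Bool → Set Bool → Prop :=
      fun x U y V => U = Set.univ ∧ V = Set.univ ∧ x = y
    -- Z is a partial bisimulation relating the two scenarios
    ((∀ x U y V, Z x U y V →
        (∀ p, x ∈ v p ↔ y ∈ v p) ∧
        (∀ a ∈ U, ∃ b ∈ V, Z a U b V) ∧
        (∀ b ∈ V, ∃ a ∈ U, Z a U b V)) ∧
      Z true Set.univ true Set.univ ∧ Z false Set.univ false Set.univ) ∧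
    -- int(p) distinguishes the two related scenarios
    (@sat Bool t1 v (.int (.atom 0)) true Set.univ ∧
      ¬ @sat Bool t2 v (.int (.atom 0)) true Set.univ) ∧
    -- hence no EL formula is equivalent to int(p) over topological subset models
    ¬ ∃ φ : FormEL, ∀ (α : Type) (inst : TopologicalSpace α) (w : ℕ → Set α)
        (x : α) (U : Set α), x ∈ U → inst.IsOpen U →
        (satEL w φ x U ↔ @sat α inst w (.int (.atom 0)) x U) := by

  intro t1 t2 v Z
  have hset : {y ∈ (Set.univ : Set Bool) | @sat Bool t1 v (.atom 0) y Set.univ} = {true} := by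
    ext b; cases b <;> simp [sat, v]
  have hset2 : {y ∈ (Set.univ : Set Bool) | @sat Bool t2 v (.atom 0) y Set.univ} = {true} := by
    ext b; cases b <;> simp [sat, v]
  have h1 : @sat Bool t1 v (.int (.atom 0)) true Set.univ := by
    show true ∈ @interior Bool t1 _
    rw [hset]
    rw [@aux_interior_eq Bool ⊥ {true} (@isOpen_discrete Bool ⊥ (discreteTopology_bot Bool) {true})]
    simp
  have hmono : ∀ s : Set Bool, @IsOpen Bool t2 s → true ∈ s → false ∈ s := by
    intro s hs
    induction hs with
    | basic u hu => simp_all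
    | univ => simp
    | inter u w _ _ ihu ihw => exact fun h => ⟨ihu h.1, ihw h.2⟩
    | sUnion S _ ih => rintro ⟨u, hu, ht⟩; exact ⟨u, hu, ih u hu ht⟩
  have h2 : ¬ @sat Bool t2 v (.int (.atom 0)) true Set.univ := by
    show ¬ true ∈ @interior Bool t2 _
    rw [hset2]
    intro h
    rcases (@aux_mem_interior Bool t2 {true} true).1 h with ⟨u, hsub, hopen, ht⟩
    have := hsub (hmono u hopen ht)
    simp at this
  refine ⟨⟨?_, ⟨rfl, rfl, rfl⟩, ⟨rfl, rfl, rfl⟩⟩, ⟨h1, h2⟩, ?_⟩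
  · rintro x U y V ⟨rfl, rfl, rfl⟩
    exact ⟨fun p => Iff.rfl, fun a _ => ⟨a, Set.mem_univ a, rfl, rfl, rfl⟩,
      fun b _ => ⟨b, Set.mem_univ b, rfl, rfl, rfl⟩⟩
  · rintro ⟨φ, hφ⟩
    have e1 := hφ Bool t1 v true Set.univ (Set.mem_univ _) (@isOpen_discrete Bool ⊥ (discreteTopology_bot Bool) _)
    have e2 := hφ Bool t2 v true Set.univ (Set.mem_univ _) (by exact @isOpen_univ Bool t2)
    exact h2 (e2.1 (e1.2 h1))
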